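/- arXiv:1711.00274 — 7 statements merged into one kernel-verified Lean document; each statement's English description precedes it below -/
import Mathlib

section
/- The function Υ(μ,w) = Σ_{(a,b)∈Γ} log(1 + w_{(a,b)}) is a good containment function for ℋ: it is nonnegative, vanishes at points with w = 0, is continuously differentiable, has compact sublevel sets in E = 𝒫({1,…,q}) × [0,∞)^Γ, and satisfies sup_{(μ,w)∈E} ℋ((μ,w), ∇Υ(μ,w)) ≤ (e − 1)·Σ_{(a,b)∈Γ} sup_μ v(a,b,μ) < ∞. -/
/-- Directed edges on `{1,…,q}`. -/
abbrev Edge (q : ℕ) := {e : Fin q × Fin q // e.1 ≠ e.2}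

/-- The containment function `Υ(μ,w) = Σ log(1 + w_{(a,b)})`. -/
noncomputable def Upsilon {q : ℕ} (w : Edge q → ℝ) : ℝ :=
  ∑ e : Edge q, Real.log (1 + w e)

/-- `Υ` is a good containment function for `ℋ`: nonnegative, vanishing at `w = 0`,
continuously differentiable, with compact sublevel sets in
`E = 𝒫({1,…,q}) × [0,∞)^Γ`, and
`sup_E ℋ((μ,w),∇Υ(μ,w)) ≤ (e-1)·Σ_{(a,b)} sup_μ v(a,b,μ)`. -/
theorem stmt3 (q : ℕ) (hq : 2 ≤ q)
    (v : Edge q → stdSimplex ℝ (Fin q) → ℝ)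
    (hv0 : ∀ e μ, 0 ≤ v e μ)
    (hvc : ∀ e, Continuous (v e)) :
    (∀ w : Edge q → ℝ, (∀ e, 0 ≤ w e) → 0 ≤ Upsilon w) ∧
    (Upsilon (fun _ : Edge q => (0 : ℝ)) = 0) ∧
    ContDiffOn ℝ 1 (Upsilon (q := q)) {w | ∀ e, 0 ≤ w e} ∧
    (∀ c : ℝ, IsCompact {x : (stdSimplex ℝ (Fin q)) × (Edge q → ℝ) |
        (∀ e, 0 ≤ x.2 e) ∧ Upsilon x.2 ≤ c}) ∧
    (∀ (μ : stdSimplex ℝ (Fin q)) (w : Edge q → ℝ), (∀ e, 0 ≤ w e) →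
      ∑ e : Edge q, v e μ * (Real.exp (1 + w e)⁻¹ - 1) ≤
        (Real.exp 1 - 1) * ∑ e : Edge q, ⨆ μ' : stdSimplex ℝ (Fin q), v e μ') := by
  have hlog_nonneg : ∀ (w : Edge q → ℝ), (∀ e, 0 ≤ w e) → ∀ e : Edge q,
      0 ≤ Real.log (1 + w e) := by
    intro w hw e
    apply Real.log_nonneg
    linarith [hw e]
  refine ⟨?_, ?_, ?_, ?_, ?_⟩
  · intro w hw
    exact Finset.sum_nonneg fun e _ => hlog_nonneg w hw e
  · simp [Upsilon]
  · apply ContDiffOn.sum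
    intro e _
    apply ContDiffOn.log
    · exact ((contDiff_const.add (contDiff_apply ℝ ℝ e)).contDiffOn)
    · intro x hx
      have := hx e
      positivity
  · intro c
    have hcs : CompactSpace (stdSimplex ℝ (Fin q)) :=
      isCompact_iff_compactSpace.mp (isCompact_stdSimplex _ _)
    set K : Set ((stdSimplex ℝ (Fin q)) × (Edge q → ℝ)) :=
      Set.univ ×ˢ (Set.univ.pi fun _ : Edge q => Set.Icc 0 (Real.exp c - 1)) with hK
    have hKc : IsCompact K :=
      isCompact_univ.prod (isCompact_univ_pi fun _ => isCompact_Icc)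
    set Φ : (Edge q → ℝ) → ℝ := fun w => ∑ e : Edge q, Real.log (1 + max (w e) 0) with hΦ
    have hΦcont : Continuous Φ := by
      apply continuous_finset_sum
      intro e _
      apply Continuous.log
      · exact continuous_const.add ((continuous_apply e).max continuous_const)
      · intro x
        have : (0:ℝ) ≤ max (x e) 0 := le_max_right _ _
        positivity
    have hΦeq : ∀ w : Edge q → ℝ, (∀ e, 0 ≤ w e) → Φ w = Upsilon w := by
      intro w hw
      apply Finset.sum_congr rfl
      intro e _
      rw [max_eq_left (hw e)]
    have hset : {x : (stdSimplex ℝ (Fin q)) × (Edge q → ℝ) |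
        (∀ e, 0 ≤ x.2 e) ∧ Upsilon x.2 ≤ c} =
        {x | ∀ e, 0 ≤ x.2 e} ∩ {x | Φ x.2 ≤ c} := by
      ext x
      simp only [Set.mem_setOf_eq, Set.mem_inter_iff]
      constructor
      · rintro ⟨h1, h2⟩; exact ⟨h1, by rw [hΦeq _ h1]; exact h2⟩
      · rintro ⟨h1, h2⟩; exact ⟨h1, by rw [← hΦeq _ h1]; exact h2⟩
    have hclosed : IsClosed ({x : (stdSimplex ℝ (Fin q)) × (Edge q → ℝ) |
        ∀ e, 0 ≤ x.2 e} ∩ {x | Φ x.2 ≤ c}) := by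
      apply IsClosed.inter
      · have : {x : (stdSimplex ℝ (Fin q)) × (Edge q → ℝ) | ∀ e, 0 ≤ x.2 e} =
            ⋂ e : Edge q, {x | 0 ≤ x.2 e} := by ext x; simp
        rw [this]
        exact isClosed_iInter fun e =>
          isClosed_le continuous_const ((continuous_apply e).comp continuous_snd)
      · exact isClosed_le (hΦcont.comp continuous_snd) continuous_const
    have hsub : {x : (stdSimplex ℝ (Fin q)) × (Edge q → ℝ) |
        (∀ e, 0 ≤ x.2 e) ∧ Upsilon x.2 ≤ c} ⊆ K := by
      rintro ⟨μ, w⟩ ⟨h1, h2⟩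
      refine ⟨Set.mem_univ _, fun e _ => ⟨h1 e, ?_⟩⟩
      have hle : Real.log (1 + w e) ≤ c := by
        have : Real.log (1 + w e) ≤ Upsilon w := by
          apply Finset.single_le_sum (fun e' _ => hlog_nonneg w h1 e') (Finset.mem_univ e)
        linarith
      have hpos : (0:ℝ) < 1 + w e := by linarith [h1 e]
      have := (Real.log_le_iff_le_exp hpos).mp hle
      linarith
    rw [hset]
    exact hKc.of_isClosed_subset hclosed (hset ▸ hsub)
  · intro μ w hw
    have hcs : CompactSpace (stdSimplex ℝ (Fin q)) :=
      isCompact_iff_compactSpace.mp (isCompact_stdSimplex _ _)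
    have hne : Nonempty (stdSimplex ℝ (Fin q)) := by
      have h0 : (0:ℕ) < q := by omega
      exact ⟨⟨_, ite_eq_mem_stdSimplex (𝕜 := ℝ) (⟨0, h0⟩ : Fin q)⟩⟩
    rw [Finset.mul_sum]
    apply Finset.sum_le_sum
    intro e _
    have hbdd : BddAbove (Set.range (v e)) :=
      (isCompact_range (hvc e)).bddAbove
    have hvle : v e μ ≤ ⨆ μ', v e μ' := le_ciSup hbdd μ
    have hsup0 : 0 ≤ ⨆ μ', v e μ' := le_trans (hv0 e μ) hvle
    have ht1 : (1 + w e)⁻¹ ≤ 1 := by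
      rw [inv_le_one_iff₀]; right; linarith [hw e]
    have hpos : (0:ℝ) < 1 + w e := by linarith [hw e]
    have ht0 : 0 ≤ (1 + w e)⁻¹ := by positivity
    have he1 : Real.exp (1 + w e)⁻¹ - 1 ≤ Real.exp 1 - 1 := by
      have := Real.exp_le_exp.mpr ht1; linarith
    have he0 : 0 ≤ Real.exp (1 + w e)⁻¹ - 1 := by
      have := Real.one_le_exp ht0; linarith
    calc v e μ * (Real.exp (1 + w e)⁻¹ - 1)
        ≤ (⨆ μ', v e μ') * (Real.exp 1 - 1) :=
          mul_le_mul hvle he1 he0 hsup0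
      _ = (Real.exp 1 - 1) * ⨆ μ', v e μ' := mul_comm _ _
end

section
/- Let X be a metric space, F : X × X → ℝ ∪ {−∞} bounded above, upper semicontinuous, with compact superlevel sets {F ≥ c} for every c ∈ ℝ, and let G : X × X → [0,∞] be lower semicontinuous with G(x,x) = 0 for all x. Then for each α > 0 there exist (x_α, y_α) maximizing F − αG over X × X; the family {(x_α,y_α)}_{α>0} is relatively compact; any limit point (x₀,y₀) as α → ∞ satisfies G(x₀,y₀) = 0 and F(x₀,y₀) = sup{F(x,y) : G(x,y) = 0}; and α·G(x_α,y_α) → 0 as α → ∞. -/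
open Filter Topology
open scoped ENNReal

/-- Maximizers of upper semicontinuous functions with compact superlevel sets exist. -/
lemma stmt5_aux_max {Y : Type*} [TopologicalSpace Y] (Φ : Y → EReal)
    (husc : UpperSemicontinuous Φ) (hcpt : ∀ c : ℝ, IsCompact {z | (c : EReal) ≤ Φ z})
    (hne : ∃ z, Φ z ≠ ⊥) : ∃ w, ∀ z, Φ z ≤ Φ w := by
  obtain ⟨z₁, hz₁⟩ := hne
  set s : EReal := ⨆ z, Φ z with hs
  have hsbot : ⊥ < s := lt_of_lt_of_le (Ne.bot_lt hz₁) (le_iSup Φ z₁)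
  have hclosed : ∀ c : ℝ, IsClosed {z | (c : EReal) ≤ Φ z} := fun c =>
    husc.isClosed_preimage c
  set ι := {c : ℝ // (c : EReal) < s}
  obtain ⟨c₁, hc₁, hc₁'⟩ := EReal.exists_between_coe_real hsbot
  have hιne : Nonempty ι := ⟨⟨c₁, hc₁'⟩⟩
  have hdir : Directed (· ⊇ ·) (fun c : ι => {z | (c.1 : EReal) ≤ Φ z}) := by
    intro a b
    rcases le_total a.1 b.1 with h | h
    · exact ⟨b, fun z hz => le_trans (EReal.coe_le_coe_iff.2 h) hz, fun z hz => hz⟩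
    · exact ⟨a, fun z hz => hz, fun z hz => le_trans (EReal.coe_le_coe_iff.2 h) hz⟩
  have hnonempty : ∀ c : ι, {z | (c.1 : EReal) ≤ Φ z}.Nonempty := by
    intro c
    have : (c.1 : EReal) < ⨆ z, Φ z := c.2
    obtain ⟨z, hz⟩ := lt_iSup_iff.1 this
    exact ⟨z, hz.le⟩
  obtain ⟨w, hw⟩ := IsCompact.nonempty_iInter_of_directed_nonempty_isCompact_isClosed
    (fun c : ι => {z | (c.1 : EReal) ≤ Φ z}) hdir hnonempty (fun c => hcpt c.1)
    (fun c => hclosed c.1)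
  refine ⟨w, fun z => le_trans (le_iSup Φ z) ?_⟩
  by_contra h
  push_neg at h
  obtain ⟨c, hc, hc'⟩ := EReal.exists_between_coe_real h
  exact absurd (Set.mem_iInter.1 hw ⟨c, hc'⟩) (not_le.2 hc)

/-- Abstract doubling-of-variables lemma: maximizers of `F - αG` exist, the family
of maximizers is relatively compact, every limit point `(x₀,y₀)` as `α → ∞`
satisfies `G(x₀,y₀) = 0` and `F(x₀,y₀) = sup{F : G = 0}`, and `α G(x_α,y_α) → 0`. -/
theorem stmt5 {X : Type*} [MetricSpace X]
    (F : X × X → EReal) (G : X × X → ℝ≥0∞)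
    (hFbdd : ∃ M : ℝ, ∀ z, F z ≤ (M : EReal))
    (hFusc : UpperSemicontinuous F)
    (hFcpt : ∀ c : ℝ, IsCompact {z | (c : EReal) ≤ F z})
    (hGlsc : LowerSemicontinuous G)
    (hGdiag : ∀ x : X, G (x, x) = 0)
    (hne : ∃ z, G z = 0 ∧ F z ≠ ⊥) :
    ∃ xy : ℝ → X × X,
      (∀ α : ℝ, 0 < α → ∀ z : X × X,
          F z - (α : EReal) * (G z : EReal) ≤
            F (xy α) - (α : EReal) * (G (xy α) : EReal)) ∧
      IsCompact (closure {p : X × X | ∃ α : ℝ, 0 < α ∧ xy α = p}) ∧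
      (∀ z₀ : X × X, MapClusterPt z₀ atTop xy →
          G z₀ = 0 ∧ F z₀ = sSup (F '' {z | G z = 0})) ∧
      Tendsto (fun α : ℝ => (α : EReal) * (G (xy α) : EReal)) atTop (nhds 0) := by
  obtain ⟨M, hM⟩ := hFbdd
  obtain ⟨z₀, hGz₀, hFz₀⟩ := hne
  set Φ : ℝ → (X × X) → EReal := fun α z => F z - (α : EReal) * (G z : EReal) with hΦ
  have hFtop : ∀ z, F z ≠ ⊤ := fun z => ((hM z).trans_lt (EReal.coe_lt_top M)).ne
  have hnn : ∀ (α : ℝ), 0 ≤ α → ∀ z, (0 : EReal) ≤ (α : EReal) * (G z : EReal) :=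
    fun α hα z => mul_nonneg (EReal.coe_nonneg.2 hα) (EReal.coe_ennreal_nonneg _)
  have hΦleF : ∀ (α : ℝ), 0 ≤ α → ∀ z, Φ α z ≤ F z := by
    intro α hα z
    have h1 : -((α : EReal) * (G z : EReal)) ≤ 0 := by
      rw [EReal.neg_le]
      simpa using hnn α hα z
    calc F z - (α : EReal) * (G z : EReal)
        = F z + -((α : EReal) * (G z : EReal)) := sub_eq_add_neg _ _
      _ ≤ F z + 0 := add_le_add_right h1 _
      _ = F z := add_zero _
  have hΦdiag : ∀ (α : ℝ) z, G z = 0 → Φ α z = F z := by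
    intro α z hz
    rw [hΦ]
    simp [hz]
  -- existence of maximizers
  have hex : ∀ α : ℝ, 0 < α → ∃ w, ∀ z, Φ α z ≤ Φ α w := by
    intro α hα
    have h1 : LowerSemicontinuous (fun z => (ENNReal.ofReal α * G z : ℝ≥0∞)) :=
      (ENNReal.continuous_const_mul ENNReal.ofReal_ne_top).comp_lowerSemicontinuous
        hGlsc (fun a b h => mul_le_mul_right h _)
    have h2 : LowerSemicontinuous (fun z => ((ENNReal.ofReal α * G z : ℝ≥0∞) : EReal)) :=
      continuous_coe_ennreal_ereal.comp_lowerSemicontinuous h1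
        (fun a b h => EReal.coe_ennreal_le_coe_ennreal_iff.2 h)
    have hlsc : LowerSemicontinuous (fun z => (α : EReal) * (G z : EReal)) := by
      convert h2 using 2 with z
      rw [EReal.coe_ennreal_mul, EReal.coe_ennreal_ofReal, max_eq_left hα.le]
    have husc2 : UpperSemicontinuous (fun z => -((α : EReal) * (G z : EReal))) :=
      continuous_neg.comp_lowerSemicontinuous_antitone hlsc
        (fun a b h => EReal.neg_le_neg_iff.2 h)
    have husc : UpperSemicontinuous (Φ α) := by
      rw [hΦ]
      simp only [sub_eq_add_neg]
      apply hFusc.add' husc2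
      intro x
      apply EReal.continuousAt_add
      · left; exact hFtop x
      · right
        intro h
        rw [EReal.neg_eq_top_iff] at h
        have := hnn α hα.le x
        rw [h] at this
        exact absurd this (by simp)
    have hcpt : ∀ c : ℝ, IsCompact {z | (c : EReal) ≤ Φ α z} := fun c =>
      (hFcpt c).of_isClosed_subset (husc.isClosed_preimage c)
        (fun z hz => le_trans hz (hΦleF α hα.le z))
    exact stmt5_aux_max (Φ α) husc hcpt ⟨z₀, by rw [hΦdiag α z₀ hGz₀]; exact hFz₀⟩
  choose w hw using hex
  set xy : ℝ → X × X := fun α => if h : 0 < α then w α h else z₀ with hxy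
  have hxyval : ∀ (α : ℝ) (h : 0 < α), xy α = w α h := by
    intro α h
    simp only [hxy, dif_pos h]
  have hmax : ∀ α : ℝ, 0 < α → ∀ z, Φ α z ≤ Φ α (xy α) := by
    intro α hα z
    rw [hxyval α hα]
    exact hw α hα z
  set S : EReal := sSup (F '' {z | G z = 0}) with hS
  have hFz₀S : F z₀ ≤ S := le_sSup ⟨z₀, hGz₀, rfl⟩
  have hSbot : ⊥ < S := (Ne.bot_lt hFz₀).trans_le hFz₀S
  have hSm : ∀ α : ℝ, 0 < α → S ≤ Φ α (xy α) := by
    intro α hα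
    apply sSup_le
    rintro v ⟨z, hz, rfl⟩
    rw [← hΦdiag α z hz]
    exact hmax α hα z
  obtain ⟨c₀, hc₀b, hc₀⟩ := EReal.exists_between_coe_real hSbot
  have hmbot : ∀ α : ℝ, 0 < α → (c₀ : EReal) ≤ Φ α (xy α) := fun α hα =>
    hc₀.le.trans (hSm α hα)
  have hFxy : ∀ α : ℝ, 0 < α → (c₀ : EReal) ≤ F (xy α) := fun α hα =>
    (hmbot α hα).trans (hΦleF α hα.le _)
  have hGfin : ∀ α : ℝ, 0 < α → G (xy α) ≠ ⊤ := by
    intro α hα h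
    have h2 : Φ α (xy α) = ⊥ := by
      rw [hΦ]
      simp only []
      rw [h, EReal.coe_ennreal_top, EReal.mul_top_of_pos (by exact_mod_cast hα),
        sub_eq_add_neg, EReal.neg_top, EReal.add_bot]
    have := hmbot α hα
    rw [h2, le_bot_iff] at this
    exact EReal.coe_ne_bot c₀ this
  have hFnebot : ∀ α : ℝ, 0 < α → F (xy α) ≠ ⊥ := by
    intro α hα h
    have := hFxy α hα
    rw [h, le_bot_iff] at this
    exact EReal.coe_ne_bot c₀ this
  -- real-valued representatives
  set fr : ℝ → ℝ := fun α => (F (xy α)).toReal with hfr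
  set gr : ℝ → ℝ := fun α => (G (xy α)).toReal with hgr
  set mr : ℝ → ℝ := fun α => fr α - α * gr α with hmr
  have hgrnn : ∀ α, 0 ≤ gr α := fun α => ENNReal.toReal_nonneg
  have hFrepr : ∀ α : ℝ, 0 < α → F (xy α) = ((fr α : ℝ) : EReal) := fun α hα =>
    (EReal.coe_toReal (hFtop _) (hFnebot α hα)).symm
  have hGrepr : ∀ α : ℝ, 0 < α → (G (xy α) : EReal) = ((gr α : ℝ) : EReal) := by
    intro α hα
    have h1 : ((G (xy α) : EReal).toReal : EReal) = (G (xy α) : EReal) :=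
      EReal.coe_toReal (by simpa [EReal.coe_ennreal_eq_top_iff] using hGfin α hα)
        (EReal.coe_ennreal_ne_bot _)
    rw [← h1, EReal.toReal_coe_ennreal]
  have hval : ∀ α β : ℝ, 0 < α → 0 < β →
      Φ α (xy β) = ((fr β - α * gr β : ℝ) : EReal) := by
    intro α β hα hβ
    rw [hΦ]
    simp only []
    rw [hFrepr β hβ, hGrepr β hβ]
    norm_cast
  have hΦrepr : ∀ α : ℝ, 0 < α → Φ α (xy α) = ((mr α : ℝ) : EReal) := fun α hα =>
    hval α α hα hα
  have hR : ∀ α β : ℝ, 0 < α → 0 < β → fr β - α * gr β ≤ mr α := by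
    intro α β hα hβ
    have h1 := hmax α hα (xy β)
    rw [hΦrepr α hα, hval α β hα hβ] at h1
    exact_mod_cast h1
  have hmono : ∀ α β : ℝ, 0 < α → α ≤ β → mr β ≤ mr α := by
    intro α β hα hαβ
    have hβ : 0 < β := hα.trans_le hαβ
    have h1 := hR α β hα hβ
    have h2 : mr β = fr β - β * gr β := rfl
    nlinarith [mul_le_mul_of_nonneg_right hαβ (hgrnn β)]
  have hmrb : ∀ α : ℝ, 0 < α → c₀ ≤ mr α := by
    intro α hα
    have := hmbot α hα
    rw [hΦrepr α hα] at this
    exact_mod_cast this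
  have hanti : Antitone (fun t : ℝ => mr (max t 1)) := fun a b hab =>
    hmono (max a 1) (max b 1) (lt_of_lt_of_le one_pos (le_max_right a 1))
      (max_le_max hab le_rfl)
  have hbdd : BddBelow (Set.range fun t : ℝ => mr (max t 1)) := by
    refine ⟨c₀, ?_⟩
    rintro _ ⟨t, rfl⟩
    exact hmrb _ (lt_of_lt_of_le one_pos (le_max_right t 1))
  set L : ℝ := ⨅ t : ℝ, mr (max t 1) with hL
  have hmrL : Tendsto mr atTop (𝓝 L) := by
    have h1 : Tendsto (fun t : ℝ => mr (max t 1)) atTop (𝓝 L) :=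
      tendsto_atTop_ciInf hanti hbdd
    refine Tendsto.congr' ?_ h1
    filter_upwards [eventually_ge_atTop 1] with t ht
    rw [max_eq_left ht]
  have h2α : Tendsto (fun α : ℝ => mr (2 * α)) atTop (𝓝 L) :=
    hmrL.comp (tendsto_id.const_mul_atTop two_pos)
  have hdiff : Tendsto (fun α : ℝ => mr α - mr (2 * α)) atTop (𝓝 0) := by
    have := hmrL.sub h2α
    simpa using this
  have hαg2 : Tendsto (fun α : ℝ => α * gr (2 * α)) atTop (𝓝 0) := by
    apply tendsto_of_tendsto_of_tendsto_of_le_of_le' tendsto_const_nhds hdiff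
    · filter_upwards [eventually_gt_atTop 0] with α hα
      exact mul_nonneg hα.le (hgrnn _)
    · filter_upwards [eventually_gt_atTop 0] with α hα
      have h1 := hR α (2 * α) hα (by linarith)
      have h2 : mr (2 * α) = fr (2 * α) - (2 * α) * gr (2 * α) := rfl
      linarith
  have hg : Tendsto (fun β : ℝ => β * gr β) atTop (𝓝 0) := by
    have h1 : Tendsto (fun α : ℝ => 2 * (α * gr (2 * α))) atTop (𝓝 0) := by
      simpa using hαg2.const_mul 2
    have h2 : Tendsto (fun β : ℝ => 2 * ((β / 2) * gr (2 * (β / 2)))) atTop (𝓝 0) :=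
      h1.comp (tendsto_id.atTop_div_const two_pos)
    refine Tendsto.congr (fun β => ?_) h2
    have hββ : 2 * (β / 2) = β := by ring
    rw [hββ]
    ring
  have hgr0 : Tendsto gr atTop (𝓝 0) := by
    apply tendsto_of_tendsto_of_tendsto_of_le_of_le' tendsto_const_nhds hg
    · filter_upwards with α using hgrnn α
    · filter_upwards [eventually_ge_atTop 1] with α hα
      nlinarith [hgrnn α]
  have hG0 : Tendsto (fun α : ℝ => G (xy α)) atTop (𝓝 0) := by
    have h1 : Tendsto (fun α : ℝ => ENNReal.ofReal (gr α)) atTop (𝓝 0) := by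
      rw [← ENNReal.ofReal_zero]
      exact (ENNReal.continuous_ofReal.tendsto 0).comp hgr0
    refine Tendsto.congr' ?_ h1
    filter_upwards [eventually_gt_atTop 0] with α hα
    exact ENNReal.ofReal_toReal (hGfin α hα)
  have hfrL : Tendsto fr atTop (𝓝 L) := by
    have h1 : Tendsto (fun α : ℝ => mr α + α * gr α) atTop (𝓝 (L + 0)) := hmrL.add hg
    rw [add_zero] at h1
    refine Tendsto.congr (fun α => ?_) h1
    show fr α - α * gr α + α * gr α = fr α
    ring
  refine ⟨xy, fun α hα z => hmax α hα z, ?_, ?_, ?_⟩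
  · -- relative compactness
    have hsub : {p : X × X | ∃ α : ℝ, 0 < α ∧ xy α = p} ⊆ {z | (c₀ : EReal) ≤ F z} := by
      rintro p ⟨α, hα, rfl⟩
      exact hFxy α hα
    exact (hFcpt c₀).of_isClosed_subset isClosed_closure
      (closure_minimal hsub (hFcpt c₀).isClosed)
  · -- cluster points
    intro z' hz'
    have hneb : (𝓝 z' ⊓ map xy atTop).NeBot := hz'
    have hGz' : G z' = 0 := by
      by_contra h0
      obtain ⟨c, hc0, hc⟩ := exists_between (pos_iff_ne_zero.2 h0)
      have hU : {z : X × X | c < G z} ∈ 𝓝 z' := hGlsc z' c hc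
      have hV : {z : X × X | G z < c} ∈ map xy atTop := by
        rw [mem_map]
        exact hG0 (Iio_mem_nhds hc0)
      obtain ⟨z, hz1, hz2⟩ := Filter.nonempty_of_mem
        (Filter.inter_mem (mem_inf_of_left hU) (mem_inf_of_right hV))
      have h1 : c < G z := hz1
      have h2 : G z < c := hz2
      exact absurd h2 (not_lt.2 h1.le)
    have hSL : S ≤ ((L : ℝ) : EReal) := by
      have hcoeL : Tendsto (fun α : ℝ => ((mr α : ℝ) : EReal)) atTop (𝓝 ((L : ℝ) : EReal)) :=
        (continuous_coe_real_ereal.tendsto L).comp hmrL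
      apply ge_of_tendsto hcoeL
      filter_upwards [eventually_gt_atTop 0] with α hα
      rw [← hΦrepr α hα]
      exact hSm α hα
    have hLF : ((L : ℝ) : EReal) ≤ F z' := by
      by_contra h
      push_neg at h
      obtain ⟨c, hc1, hc2⟩ := EReal.exists_between_coe_real h
      have hU : {z : X × X | F z < (c : EReal)} ∈ 𝓝 z' := hFusc z' c hc1
      have hV : {z : X × X | (c : EReal) < F z} ∈ map xy atTop := by
        rw [mem_map]
        have hcL : c < L := by exact_mod_cast hc2
        filter_upwards [hfrL.eventually_const_lt hcL, eventually_gt_atTop 0] with α h1 h2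
        show (c : EReal) < F (xy α)
        rw [hFrepr α h2]
        exact_mod_cast h1
      obtain ⟨z, hz1, hz2⟩ := Filter.nonempty_of_mem
        (Filter.inter_mem (mem_inf_of_left hU) (mem_inf_of_right hV))
      have h1 : F z < (c : EReal) := hz1
      have h2 : (c : EReal) < F z := hz2
      exact absurd h2 (not_lt.2 h1.le)
    exact ⟨hGz', le_antisymm (le_sSup ⟨z', hGz', rfl⟩) (hSL.trans hLF)⟩
  · -- α G(xy α) → 0
    have h1 : Tendsto (fun α : ℝ => ((α * gr α : ℝ) : EReal)) atTop (𝓝 (((0 : ℝ) : EReal))) :=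
      (continuous_coe_real_ereal.tendsto 0).comp hg
    rw [EReal.coe_zero] at h1
    refine Tendsto.congr' ?_ h1
    filter_upwards [eventually_gt_atTop 0] with α hα
    rw [hGrepr α hα, ← EReal.coe_mul]
end

section
/- In the abstract doubling lemma setting, the map α ↦ sup_{x,y} (F(x,y) − α·G(x,y)) is nonincreasing in α, and lim_{α→∞} sup_{x,y}(F(x,y) − αG(x,y)) = sup{F(x,y) : G(x,y) = 0}. -/
open Filter
open scoped ENNReal

/-- The map `α ↦ sup_{x,y} (F(x,y) - α G(x,y))` is nonincreasing in `α ≥ 0` and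
converges, as `α → ∞`, to `sup{F(x,y) : G(x,y) = 0}`. -/
theorem stmt6 {X : Type*} [MetricSpace X]
    (F : X × X → EReal) (G : X × X → ℝ≥0∞)
    (hFbdd : ∃ M : ℝ, ∀ z, F z ≤ (M : EReal))
    (hFusc : UpperSemicontinuous F)
    (hFcpt : ∀ c : ℝ, IsCompact {z | (c : EReal) ≤ F z})
    (hGlsc : LowerSemicontinuous G)
    (hGdiag : ∀ x : X, G (x, x) = 0) :
    (∀ α β : ℝ, 0 ≤ α → α ≤ β →
        (⨆ z : X × X, (F z - (β : EReal) * (G z : EReal))) ≤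
          ⨆ z : X × X, (F z - (α : EReal) * (G z : EReal))) ∧
    Tendsto (fun α : ℝ => ⨆ z : X × X, (F z - (α : EReal) * (G z : EReal)))
      atTop (nhds (sSup (F '' {z | G z = 0}))) := by
  obtain ⟨M, hM⟩ := hFbdd
  set L := sSup (F '' {z | G z = 0}) with hLdef
  have hmul : ∀ {a b : ℝ} (g : ℝ≥0∞), a ≤ b →
      (a : EReal) * (g : EReal) ≤ (b : EReal) * (g : EReal) := fun {a b} g hab =>
    mul_le_mul_of_nonneg_right (EReal.coe_le_coe_iff.2 hab) (EReal.coe_ennreal_nonneg g)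
  have hmono : ∀ α β : ℝ, 0 ≤ α → α ≤ β →
      (⨆ z : X × X, (F z - (β : EReal) * (G z : EReal))) ≤
        ⨆ z : X × X, (F z - (α : EReal) * (G z : EReal)) := fun α β _ hαβ =>
    iSup_mono fun z => EReal.sub_le_sub le_rfl (hmul (G z) hαβ)
  refine ⟨hmono, ?_⟩
  -- lower bound : L ≤ S α for every α
  have hlow : ∀ α : ℝ, L ≤ ⨆ z : X × X, (F z - (α : EReal) * (G z : EReal)) := by
    intro α
    apply sSup_le
    rintro _ ⟨z, hz, rfl⟩
    have hz' : G z = 0 := hz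
    have : F z - (α : EReal) * (G z : EReal) = F z := by
      rw [hz', EReal.coe_ennreal_zero, mul_zero]
      exact sub_zero (F z)
    calc F z = F z - (α : EReal) * (G z : EReal) := this.symm
      _ ≤ _ := le_iSup (fun z => F z - (α : EReal) * (G z : EReal)) z
  -- key : for every real c > L, eventually S α ≤ c
  have hkey : ∀ c : ℝ, L < (c : EReal) →
      ∀ᶠ α : ℝ in atTop, (⨆ z : X × X, (F z - (α : EReal) * (G z : EReal))) ≤ (c : EReal) := by
    intro c hc
    by_contra hcon
    have hfreq : ∃ᶠ α : ℝ in atTop,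
        (c : EReal) < ⨆ z : X × X, (F z - (α : EReal) * (G z : EReal)) :=
      (Filter.not_eventually.1 hcon).mono fun α h => not_le.1 h
    -- for each n : ℕ choose z n with c ≤ F (z n) and n * G (z n) < M - c
    have hchoice : ∀ n : ℕ, ∃ z : X × X, (c : EReal) ≤ F z ∧
        ((n : ℝ) : EReal) * (G z : EReal) < ((M - c : ℝ) : EReal) := by
      intro n
      obtain ⟨α, hαn, hα⟩ := (frequently_atTop.1 hfreq) (n : ℝ)
      obtain ⟨z, hz⟩ := lt_iSup_iff.1 hα
      have hg0 : (0 : EReal) ≤ (α : EReal) * (G z : EReal) := by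
        apply mul_nonneg _ (EReal.coe_ennreal_nonneg _)
        exact_mod_cast le_trans (Nat.cast_nonneg n) hαn
      refine ⟨z, ?_, ?_⟩
      · calc (c : EReal) ≤ F z - (α : EReal) * (G z : EReal) := hz.le
          _ ≤ F z - 0 := EReal.sub_le_sub le_rfl hg0
          _ = F z := sub_zero (F z)
      · have h1 : (c : EReal) + (α : EReal) * (G z : EReal) < F z :=
          EReal.add_lt_of_lt_sub hz
        have h2 : (α : EReal) * (G z : EReal) + (c : EReal) < (M : EReal) :=
          lt_of_lt_of_le (by rwa [add_comm] at h1) (hM z)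
        have h3 : (α : EReal) * (G z : EReal) < (M : EReal) - (c : EReal) :=
          (EReal.lt_sub_iff_add_lt (Or.inl (EReal.coe_ne_bot c))
            (Or.inl (EReal.coe_ne_top c))).2 h2
        calc ((n : ℝ) : EReal) * (G z : EReal) ≤ (α : EReal) * (G z : EReal) :=
              hmul (G z) hαn
          _ < (M : EReal) - (c : EReal) := h3
          _ = ((M - c : ℝ) : EReal) := (EReal.coe_sub M c).symm
    choose z hzF hzG using hchoice
    -- the z n live in the compact superlevel set
    have hmem : ∀ n, z n ∈ {w : X × X | (c : EReal) ≤ F w} := hzF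
    obtain ⟨w, hwK, φ, hφ, hconv⟩ := (hFcpt c).tendsto_subseq hmem
    -- G w = 0
    have hGw : G w = 0 := by
      by_contra hGw
      obtain ⟨r, hr0, hrG⟩ := exists_between (pos_iff_ne_zero.2 hGw)
      have hrtop : r ≠ ⊤ := (lt_of_lt_of_le hrG le_top).ne
      have hrpos : 0 < r.toReal := ENNReal.toReal_pos hr0.ne' hrtop
      have hev : ∀ᶠ k in atTop, r < G (z (φ k)) := hconv.eventually (hGlsc w r hrG)
      obtain ⟨N, hN⟩ := exists_nat_gt ((M - c) / r.toReal)
      have hNr : M - c < N * r.toReal := (div_lt_iff₀ hrpos).1 hN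
      obtain ⟨k, hrk, hkN⟩ := (hev.and (eventually_ge_atTop N)).exists
      -- chain of inequalities
      have h1 : ((N : ℝ) : EReal) * ((r : ℝ≥0∞) : EReal) ≤
          ((φ k : ℝ) : EReal) * (G (z (φ k)) : EReal) := by
        calc ((N : ℝ) : EReal) * ((r : ℝ≥0∞) : EReal)
            ≤ ((φ k : ℝ) : EReal) * ((r : ℝ≥0∞) : EReal) := by
              apply hmul
              exact_mod_cast le_trans hkN hφ.le_apply
          _ ≤ ((φ k : ℝ) : EReal) * (G (z (φ k)) : EReal) := by
              apply mul_le_mul_of_nonneg_left _ _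
              · exact EReal.coe_ennreal_le_coe_ennreal_iff.2 hrk.le
              · exact_mod_cast Nat.cast_nonneg (φ k)
      have h2 : ((N : ℝ) : EReal) * ((r : ℝ≥0∞) : EReal) < ((M - c : ℝ) : EReal) :=
        lt_of_le_of_lt h1 (hzG (φ k))
      have hrr : ((r : ℝ≥0∞) : EReal) = ((r.toReal : ℝ) : EReal) := by
        rw [← ENNReal.ofReal_toReal hrtop, EReal.coe_ennreal_ofReal,
          max_eq_left ENNReal.toReal_nonneg, ENNReal.toReal_ofReal ENNReal.toReal_nonneg]
      rw [hrr, ← EReal.coe_mul, EReal.coe_lt_coe_iff] at h2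
      exact absurd h2 (not_lt.2 hNr.le)
    -- contradiction with L < c
    have : (c : EReal) ≤ L := le_trans hwK (le_sSup ⟨w, hGw, rfl⟩)
    exact absurd (lt_of_le_of_lt this hc) (lt_irrefl _)
  -- conclude the limit
  refine tendsto_order.2 ⟨?_, ?_⟩
  · intro a ha
    exact Eventually.of_forall fun α => lt_of_lt_of_le ha (hlow α)
  · intro b hb
    obtain ⟨c, hc1, hc2⟩ := EReal.exists_between_coe_real hb
    exact (hkey c hc1).mono fun α h => lt_of_le_of_lt h hc2
end

section
/- Fix velocities (μ̇, ẇ) ∈ ℝ^q × ℝ^Γ with μ̇_a = Σ_b (ẇ_{(b,a)} − ẇ_{(a,b)}) for all a. Then for any p ∈ ℝ^q × ℝ^Γ, Σ_a p_a μ̇_a + Σ_{(a,b)∈Γ} p_{(a,b)} ẇ_{(a,b)} = Σ_{(a,b)∈Γ} ẇ_{(a,b)}·(p_{(a,b)} − p_a + p_b). Consequently the Legendre transform L̂((μ,w),(μ̇,ẇ)) = sup_p { ⟨p,(μ̇,ẇ)⟩ − ℋ((μ,w),p) } equals Σ_{(a,b)∈Γ} S(ẇ_{(a,b)} | v(a,b,μ)).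 -/
/-- The relative-entropy cost `S(z|v)`, extended by `+∞` for `z < 0` and for
`z > 0, v = 0`. -/
noncomputable def Sent (z v : ℝ) : EReal :=
  if z = 0 then (v : EReal)
  else if z < 0 then ⊤
  else if v = 0 then ⊤
  else ((z * Real.log (z / v) - z + v : ℝ) : EReal)

lemma ereal_coe_sum {ι : Type*} (s : Finset ι) (f : ι → ℝ) :
    ((∑ i ∈ s, f i : ℝ) : EReal) = ∑ i ∈ s, ((f i : ℝ) : EReal) :=
  map_sum (⟨⟨Real.toEReal, EReal.coe_zero⟩, EReal.coe_add⟩ : ℝ →+ EReal) f s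

lemma ereal_sum_ne_bot {ι : Type*} (s : Finset ι) (f : ι → EReal)
    (hb : ∀ i ∈ s, f i ≠ ⊥) : ∑ i ∈ s, f i ≠ ⊥ := by
  classical
  induction s using Finset.induction with
  | empty => simp
  | @insert a t hi ih =>
    rw [Finset.sum_insert hi]
    intro hcon
    rcases EReal.add_eq_bot_iff.mp hcon with h | h
    · exact hb a (Finset.mem_insert_self a t) h
    · exact ih (fun i hi => hb i (Finset.mem_insert_of_mem hi)) h

lemma ereal_sum_eq_top {ι : Type*} (s : Finset ι) (f : ι → EReal)
    (hb : ∀ i ∈ s, f i ≠ ⊥) {i0 : ι} (h0 : i0 ∈ s) (ht : f i0 = ⊤) :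
    ∑ i ∈ s, f i = ⊤ := by
  classical
  rw [← Finset.add_sum_erase _ _ h0, ht]
  exact EReal.top_add_of_ne_bot
    (ereal_sum_ne_bot _ _ fun i hi => hb i (Finset.mem_of_mem_erase hi))

lemma sent_ne_bot (w V : ℝ) : Sent w V ≠ ⊥ := by
  unfold Sent; split_ifs
  · exact EReal.coe_ne_bot _
  · simp
  · simp
  · exact EReal.coe_ne_bot _

lemma sent_upper (w V : ℝ) (hV : 0 ≤ V) (t : ℝ) :
    ((w * t - V * (Real.exp t - 1) : ℝ) : EReal) ≤ Sent w V := by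
  unfold Sent
  rcases eq_or_ne w 0 with h0 | h0
  · rw [if_pos h0, EReal.coe_le_coe_iff, h0]
    nlinarith [mul_nonneg hV (Real.exp_pos t).le]
  · rw [if_neg h0]
    rcases lt_or_gt_of_ne h0 with hneg | hpos
    · rw [if_pos hneg]; exact le_top
    · rw [if_neg (not_lt.mpr hpos.le)]
      rcases eq_or_ne V 0 with hV0 | hV0
      · rw [if_pos hV0]; exact le_top
      · rw [if_neg hV0, EReal.coe_le_coe_iff]
        have hVpos : 0 < V := lt_of_le_of_ne hV (Ne.symm hV0)
        have key : t - Real.log (w / V) + 1 ≤ Real.exp (t - Real.log (w / V)) :=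
          Real.add_one_le_exp _
        have hexp : Real.exp (t - Real.log (w / V)) = Real.exp t * V / w := by
          rw [Real.exp_sub, Real.exp_log (by positivity)]
          field_simp
        rw [hexp] at key
        have := mul_le_mul_of_nonneg_left key hpos.le
        rw [mul_div_cancel₀ _ (ne_of_gt hpos)] at this
        nlinarith

lemma sent_fin (w V : ℝ) (h : w = 0 ∨ (0 < w ∧ 0 < V)) :
    Sent w V = ((if w = 0 then V else w * Real.log (w / V) - w + V : ℝ) : EReal) := by
  unfold Sent
  rcases h with h0 | ⟨hw, hV⟩
  · rw [if_pos h0, if_pos h0]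
  · rw [if_neg (ne_of_gt hw), if_neg (not_lt.mpr hw.le), if_neg (ne_of_gt hV),
      if_neg (ne_of_gt hw)]

lemma sent_top (w V : ℝ) (hV : 0 ≤ V) (h : ¬(w = 0 ∨ (0 < w ∧ 0 < V))) :
    Sent w V = ⊤ := by
  push_neg at h
  obtain ⟨h1, h2⟩ := h
  unfold Sent
  rw [if_neg h1]
  rcases lt_or_gt_of_ne h1 with hneg | hpos
  · rw [if_pos hneg]
  · rw [if_neg (not_lt.mpr hpos.le), if_pos (le_antisymm (h2 hpos) hV)]

lemma sent_approx (w V : ℝ) (hV : 0 ≤ V) (h : w = 0 ∨ (0 < w ∧ 0 < V))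
    (ε : ℝ) (hε : 0 < ε) :
    ∃ t : ℝ, (if w = 0 then V else w * Real.log (w / V) - w + V) ≤
      w * t - V * (Real.exp t - 1) + ε := by
  rcases h with h0 | ⟨hw, hVp⟩
  · refine ⟨Real.log (ε / (V + 1)), ?_⟩
    rw [if_pos h0, h0, Real.exp_log (by positivity)]
    have hV1 : 0 < V + 1 := by linarith
    have key : V * (ε / (V + 1)) ≤ ε := by
      rw [mul_comm, div_mul_eq_mul_div, div_le_iff₀ hV1]
      nlinarith
    nlinarith
  · refine ⟨Real.log (w / V), ?_⟩
    rw [if_neg (ne_of_gt hw), Real.exp_log (by positivity)]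
    have : V * (w / V) = w := by field_simp
    nlinarith

lemma sent_unb (w V : ℝ) (hV : 0 ≤ V) (h : ¬(w = 0 ∨ (0 < w ∧ 0 < V))) (M : ℝ) :
    ∃ t : ℝ, M ≤ w * t - V * (Real.exp t - 1) := by
  push_neg at h
  obtain ⟨h1, h2⟩ := h
  rcases lt_or_gt_of_ne h1 with hneg | hpos
  · refine ⟨min (M / w) 0, ?_⟩
    have ht0 : min (M / w) 0 ≤ 0 := min_le_right _ _
    have hexp : Real.exp (min (M / w) 0) ≤ 1 := Real.exp_le_one_iff.mpr ht0
    have h3 : w * (M / w) ≤ w * min (M / w) 0 :=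
      mul_le_mul_of_nonpos_left (min_le_left _ _) hneg.le
    rw [mul_div_cancel₀ _ (ne_of_lt hneg)] at h3
    nlinarith [mul_nonneg hV (sub_nonneg.mpr hexp)]
  · have hV0 : V = 0 := le_antisymm (h2 hpos) hV
    refine ⟨M / w, ?_⟩
    rw [hV0, mul_div_cancel₀ _ (ne_of_gt hpos)]
    simp

lemma ereal_coe_le_of_forall (r : ℝ) (x : EReal)
    (h : ∀ ε : ℝ, 0 < ε → ((r - ε : ℝ) : EReal) ≤ x) : (r : EReal) ≤ x := by
  induction x with
  | bot =>
    exact absurd (le_bot_iff.mp (h 1 one_pos)) (EReal.coe_ne_bot _)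
  | coe y =>
    exact EReal.coe_le_coe_iff.mpr
      (le_of_forall_sub_le fun ε hε => EReal.coe_le_coe_iff.mp (h ε hε))
  | top => exact le_top

/-- Under the continuity equation `μ̇_a = Σ_b (ẇ_{(b,a)} - ẇ_{(a,b)})`, the linear
pairing reduces to `Σ_{(a,b)} ẇ_{(a,b)}(p_{(a,b)} - p_a + p_b)`, and the Legendre
transform of the Hamiltonian equals `Σ_{(a,b)} S(ẇ_{(a,b)} | v(a,b,μ))`. -/
theorem stmt9 (q : ℕ) (v : Edge q → ℝ) (hv : ∀ e, 0 ≤ v e)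
    (μdot : Fin q → ℝ) (wdot : Edge q → ℝ)
    (hcont : ∀ a : Fin q, μdot a =
      ∑ e : Edge q, ((if e.1.2 = a then wdot e else 0) -
        (if e.1.1 = a then wdot e else 0))) :
    (∀ p : (Fin q → ℝ) × (Edge q → ℝ),
      ∑ a, p.1 a * μdot a + ∑ e : Edge q, p.2 e * wdot e =
        ∑ e : Edge q, wdot e * (p.2 e - p.1 e.1.1 + p.1 e.1.2)) ∧
    (⨆ p : (Fin q → ℝ) × (Edge q → ℝ),
        ((∑ a, p.1 a * μdot a + ∑ e : Edge q, p.2 e * wdot e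
          - ∑ e : Edge q, v e * (Real.exp (p.1 e.1.2 - p.1 e.1.1 + p.2 e) - 1)
            : ℝ) : EReal)) =
      ∑ e : Edge q, Sent (wdot e) (v e) := by
  classical
  have part1 : ∀ p : (Fin q → ℝ) × (Edge q → ℝ),
      ∑ a, p.1 a * μdot a + ∑ e : Edge q, p.2 e * wdot e =
        ∑ e : Edge q, wdot e * (p.2 e - p.1 e.1.1 + p.1 e.1.2) := by
    intro p
    have h1 : ∀ e : Edge q, ∑ a, p.1 a * ((if e.1.2 = a then wdot e else 0) -
        (if e.1.1 = a then wdot e else 0)) = wdot e * (p.1 e.1.2 - p.1 e.1.1) := by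
      intro e
      simp [mul_sub, mul_ite, Finset.sum_sub_distrib, Finset.sum_ite_eq]
      ring
    have h2 : ∑ a, p.1 a * μdot a = ∑ e : Edge q, wdot e * (p.1 e.1.2 - p.1 e.1.1) := by
      calc ∑ a, p.1 a * μdot a
          = ∑ a, ∑ e : Edge q, p.1 a * ((if e.1.2 = a then wdot e else 0) -
              (if e.1.1 = a then wdot e else 0)) := by
            simp_rw [hcont, Finset.mul_sum]
        _ = ∑ e : Edge q, ∑ a, p.1 a * ((if e.1.2 = a then wdot e else 0) -
              (if e.1.1 = a then wdot e else 0)) := Finset.sum_comm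
        _ = ∑ e : Edge q, wdot e * (p.1 e.1.2 - p.1 e.1.1) :=
            Finset.sum_congr rfl fun e _ => h1 e
    rw [h2, ← Finset.sum_add_distrib]
    exact Finset.sum_congr rfl fun e _ => by ring
  refine ⟨part1, ?_⟩
  set G : Edge q → ℝ → ℝ := fun e t => wdot e * t - v e * (Real.exp t - 1) with hG
  set F : (Edge q → ℝ) → ℝ := fun s => ∑ e : Edge q, G e (s e) with hF
  have hobj : ∀ p : (Fin q → ℝ) × (Edge q → ℝ),
      (∑ a, p.1 a * μdot a + ∑ e : Edge q, p.2 e * wdot e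
        - ∑ e : Edge q, v e * (Real.exp (p.1 e.1.2 - p.1 e.1.1 + p.2 e) - 1) : ℝ)
      = F (fun e => p.1 e.1.2 - p.1 e.1.1 + p.2 e) := by
    intro p
    rw [part1 p, hF]
    rw [← Finset.sum_sub_distrib]
    exact Finset.sum_congr rfl fun e _ => by simp only [hG]; ring
  have hstep : (⨆ p : (Fin q → ℝ) × (Edge q → ℝ),
        ((∑ a, p.1 a * μdot a + ∑ e : Edge q, p.2 e * wdot e
          - ∑ e : Edge q, v e * (Real.exp (p.1 e.1.2 - p.1 e.1.1 + p.2 e) - 1)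
            : ℝ) : EReal)) = ⨆ s : Edge q → ℝ, ((F s : ℝ) : EReal) := by
    apply le_antisymm
    · exact iSup_le fun p => by
        rw [hobj p]
        exact le_iSup (fun s : Edge q → ℝ => ((F s : ℝ) : EReal)) _
    · refine iSup_le fun s => ?_
      have := hobj (0, s)
      simp only [Prod.fst, Prod.snd] at this
      refine le_iSup_of_le (0, s) ?_
      rw [this]
      norm_num
  rw [hstep]
  apply le_antisymm
  · refine iSup_le fun s => ?_
    rw [hF]
    simp only
    rw [ereal_coe_sum]
    exact Finset.sum_le_sum fun e _ => sent_upper (wdot e) (v e) (hv e) (s e)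
  · by_cases hT : ∃ e0 : Edge q, ¬(wdot e0 = 0 ∨ (0 < wdot e0 ∧ 0 < v e0))
    · obtain ⟨e0, he0⟩ := hT
      rw [ereal_sum_eq_top Finset.univ _ (fun e _ => sent_ne_bot _ _)
        (Finset.mem_univ e0) (sent_top _ _ (hv e0) he0)]
      rw [top_le_iff, EReal.eq_top_iff_forall_lt]
      intro y
      obtain ⟨t, ht⟩ := sent_unb (wdot e0) (v e0) (hv e0) he0
        (y + 1 - ∑ e ∈ Finset.univ.erase e0, G e 0)
      set s : Edge q → ℝ := Function.update (fun _ => 0) e0 t with hs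
      have hFs : y + 1 ≤ F s := by
        rw [hF]
        simp only
        rw [← Finset.add_sum_erase _ _ (Finset.mem_univ e0)]
        have h1 : s e0 = t := Function.update_self _ _ _
        have h2 : ∑ e ∈ Finset.univ.erase e0, G e (s e)
            = ∑ e ∈ Finset.univ.erase e0, G e 0 := by
          refine Finset.sum_congr rfl fun e he => ?_
          rw [hs, Function.update_of_ne (Finset.ne_of_mem_erase he)]
        rw [h1, h2]
        have := ht
        simp only [hG] at this ⊢
        linarith
      calc (y : EReal) < ((y + 1 : ℝ) : EReal) := by
            exact_mod_cast (by linarith : y < y + 1)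
        _ ≤ ((F s : ℝ) : EReal) := by exact_mod_cast hFs
        _ ≤ ⨆ s : Edge q → ℝ, ((F s : ℝ) : EReal) :=
            le_iSup (fun s : Edge q → ℝ => ((F s : ℝ) : EReal)) s
    · push_neg at hT
      have hT' : ∀ e : Edge q, wdot e = 0 ∨ (0 < wdot e ∧ 0 < v e) := by
        intro e
        by_contra hc
        push_neg at hc
        exact absurd (hT e) (by push_neg; exact hc)
      have hRHS : ∑ e : Edge q, Sent (wdot e) (v e)
          = ((∑ e : Edge q, (if wdot e = 0 then v e
              else wdot e * Real.log (wdot e / v e) - wdot e + v e) : ℝ) : EReal) := by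
        rw [ereal_coe_sum]
        exact Finset.sum_congr rfl fun e _ => sent_fin _ _ (hT' e)
      rw [hRHS]
      apply ereal_coe_le_of_forall
      intro ε hε
      set n : ℕ := Fintype.card (Edge q) with hn
      have hδ : (0 : ℝ) < ε / (n + 1) := by positivity
      choose t htle using fun e : Edge q =>
        sent_approx (wdot e) (v e) (hv e) (hT' e) (ε / (n + 1)) hδ
      have hsum : (∑ e : Edge q, (if wdot e = 0 then v e
          else wdot e * Real.log (wdot e / v e) - wdot e + v e)) - ε ≤ F t := by
        have h1 : (∑ e : Edge q, (if wdot e = 0 then v e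
            else wdot e * Real.log (wdot e / v e) - wdot e + v e))
            ≤ ∑ e : Edge q, (G e (t e) + ε / (n + 1)) :=
          Finset.sum_le_sum fun e _ => htle e
        rw [Finset.sum_add_distrib, Finset.sum_const, Finset.card_univ] at h1
        have h2 : Fintype.card (Edge q) • (ε / ((n : ℝ) + 1)) ≤ ε := by
          rw [nsmul_eq_mul, ← hn, mul_div_assoc']
          rw [div_le_iff₀ (by positivity)]
          nlinarith [Nat.cast_nonneg (α := ℝ) n]
        rw [hF]
        simp only
        linarith
      calc ((_ - ε : ℝ) : EReal) ≤ ((F t : ℝ) : EReal) := by exact_mod_cast hsum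
        _ ≤ ⨆ s : Edge q → ℝ, ((F s : ℝ) : EReal) :=
            le_iSup (fun s : Edge q → ℝ => ((F s : ℝ) : EReal)) t
end

section
/- The Legendre transform L̂((μ,w),(μ̇,ẇ)) = sup_p { Σ_a p_a μ̇_a + Σ_{(a,b)} p_{(a,b)} ẇ_{(a,b)} − ℋ((μ,w),p) } equals +∞ whenever there exists a state a with μ̇_a ≠ Σ_b (ẇ_{(b,a)} − ẇ_{(a,b)}). -/
/-- If the continuity equation fails at some state `a`, then the Legendre
transform of the Hamiltonian is `+∞`. -/
theorem stmt10 (q : ℕ) (v : Edge q → ℝ) (hv : ∀ e, 0 ≤ v e)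
    (μdot : Fin q → ℝ) (wdot : Edge q → ℝ)
    (hfail : ∃ a : Fin q, μdot a ≠
      ∑ e : Edge q, ((if e.1.2 = a then wdot e else 0) -
        (if e.1.1 = a then wdot e else 0))) :
    (⨆ p : (Fin q → ℝ) × (Edge q → ℝ),
        ((∑ a, p.1 a * μdot a + ∑ e : Edge q, p.2 e * wdot e
          - ∑ e : Edge q, v e * (Real.exp (p.1 e.1.2 - p.1 e.1.1 + p.2 e) - 1)
            : ℝ) : EReal)) = ⊤ := by
  obtain ⟨a, ha⟩ := hfail
  set S : ℝ := ∑ e : Edge q, ((if e.1.2 = a then wdot e else 0) -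
        (if e.1.1 = a then wdot e else 0)) with hS
  set c : ℝ := μdot a - S with hc
  have hc0 : c ≠ 0 := sub_ne_zero.mpr ha
  -- for each t : ℝ, the function at the chosen p equals t * c
  have key : ∀ t : ℝ,
      ((fun p : (Fin q → ℝ) × (Edge q → ℝ) =>
        (∑ b, p.1 b * μdot b + ∑ e : Edge q, p.2 e * wdot e
          - ∑ e : Edge q, v e * (Real.exp (p.1 e.1.2 - p.1 e.1.1 + p.2 e) - 1) : ℝ))
        ((fun b => if b = a then t else 0),
         (fun e => (if e.1.1 = a then t else 0) - (if e.1.2 = a then t else 0))))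
        = t * c := by
    intro t
    simp only
    have h1 : ∑ b, (if b = a then t else 0) * μdot b = t * μdot a := by
      rw [Finset.sum_eq_single a]
      · simp
      · intro b _ hb; simp [hb]
      · simp
    have h2 : ∑ e : Edge q,
        ((if e.1.1 = a then t else 0) - (if e.1.2 = a then t else 0)) * wdot e
        = -(t * S) := by
      rw [hS, Finset.mul_sum, ← Finset.sum_neg_distrib]
      apply Finset.sum_congr rfl
      intro e _
      by_cases h1 : e.1.1 = a <;> by_cases h2 : e.1.2 = a <;>
        simp [h1, h2] <;> ring
    have h3 : ∑ e : Edge q, v e *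
        (Real.exp ((if e.1.2 = a then t else 0) - (if e.1.1 = a then t else 0)
          + ((if e.1.1 = a then t else 0) - (if e.1.2 = a then t else 0))) - 1) = 0 := by
      apply Finset.sum_eq_zero
      intro e _
      have : (if e.1.2 = a then t else 0) - (if e.1.1 = a then t else 0)
          + ((if e.1.1 = a then t else 0) - (if e.1.2 = a then t else 0)) = 0 := by ring
      rw [this]; simp
    rw [h1, h2, h3, hc]; ring
  rw [iSup_eq_top]
  intro b hb
  obtain ⟨x, hx⟩ : ∃ x : ℝ, b < (x : EReal) := by
    induction b using EReal.rec with
    | bot => exact ⟨0, by simp⟩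
    | coe r => exact ⟨r + 1, by exact_mod_cast lt_add_one r⟩
    | top => exact absurd hb (lt_irrefl _)
  refine ⟨((fun b => if b = a then x / c else 0),
      (fun e => (if e.1.1 = a then x / c else 0) - (if e.1.2 = a then x / c else 0))), ?_⟩
  have := key (x / c)
  simp only at this
  rw [this, div_mul_cancel₀ _ hc0]
  exact hx
end

section
/- Let u be bounded upper semicontinuous and v bounded lower semicontinuous on a metric space X, Ψ₁, Ψ₂ : X² → [0,∞) continuous with Ψᵢ(x,y) = 0 iff x = y, and Υ : X → [0,∞) continuous with compact sublevel sets. Fix ε > 0. Then there is a compact K_ε ⊆ X such that for every α = (α₁,α₂) ∈ (0,∞)², the function Φ_α(x,y) = u(x)/(1−ε) − v(y)/(1+ε) − α₁Ψ₁(x,y) − α₂Ψ₂(x,y) − (ε/(1−ε))Υ(x) − (ε/(1+ε))Υ(y) attains its supremum over X² at some point (x_{α,ε}, y_{α,ε}) ∈ K_ε × K_ε. -/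
/-- An upper semicontinuous real function attains its max on a nonempty compact set. -/
lemma usc_exists_max {β : Type*} [TopologicalSpace β] {s : Set β} (hs : IsCompact s)
    (hne : s.Nonempty) {f : β → ℝ} (hf : UpperSemicontinuous f) :
    ∃ x ∈ s, ∀ y ∈ s, f y ≤ f x := by
  by_contra h
  push_neg at h
  set U : s → Set β := fun y => {z | f z < f y.1} with hU
  have hUopen : ∀ y : s, IsOpen (U y) := fun y =>
    upperSemicontinuous_iff_isOpen_preimage.1 hf (f y.1)
  have hcover : s ⊆ ⋃ y : s, U y := by
    intro x hx
    obtain ⟨y, hy, hxy⟩ := h x hx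
    exact Set.mem_iUnion.2 ⟨⟨y, hy⟩, hxy⟩
  obtain ⟨t, ht⟩ := hs.elim_finite_subcover U hUopen hcover
  have htne : t.Nonempty := by
    obtain ⟨x, hx⟩ := hne
    have := ht hx
    simp only [Set.mem_iUnion] at this
    obtain ⟨y, hy, _⟩ := this
    exact ⟨y, hy⟩
  obtain ⟨y₀, hy₀t, hy₀max⟩ := t.exists_max_image (fun y => f y.1) htne
  have := ht y₀.2
  simp only [Set.mem_iUnion] at this
  obtain ⟨y, hyt, hlt⟩ := this
  exact absurd (hy₀max y hyt) (not_le.2 hlt)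

lemma usc_neg_of_lsc {β : Type*} [TopologicalSpace β] {f : β → ℝ}
    (hf : LowerSemicontinuous f) : UpperSemicontinuous fun x => -f x := by
  rw [upperSemicontinuous_iff_isOpen_preimage]
  intro y
  have : (fun x => -f x) ⁻¹' Set.Iio y = f ⁻¹' Set.Ioi (-y) := by
    ext x; simp [neg_lt, lt_neg]
  rw [this]
  exact lowerSemicontinuous_iff_isOpen_preimage.1 hf (-y)

lemma usc_div_const {β : Type*} [TopologicalSpace β] {f : β → ℝ}
    (hf : UpperSemicontinuous f) {c : ℝ} (hc : 0 < c) :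
    UpperSemicontinuous fun x => f x / c := by
  rw [upperSemicontinuous_iff_isOpen_preimage]
  intro y
  have : (fun x => f x / c) ⁻¹' Set.Iio y = f ⁻¹' Set.Iio (y * c) := by
    ext x; simp [div_lt_iff₀ hc]
  rw [this]
  exact upperSemicontinuous_iff_isOpen_preimage.1 hf (y * c)

/-- Two-penalization lemma, existence of maximizers: for `u` bounded USC, `v`
bounded LSC, good penalization functions `Ψ₁, Ψ₂` and a containment function `Υ`
with compact sublevel sets, there is a compact set `K_ε` such that for every
`α = (α₁,α₂) ∈ (0,∞)²` the doubled functional attains its supremum at a point of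
`K_ε × K_ε`. -/
theorem stmt15 {X : Type*} [MetricSpace X] [Nonempty X]
    (u v : X → ℝ) (M : ℝ) (hub : ∀ x, |u x| ≤ M) (hvb : ∀ x, |v x| ≤ M)
    (husc : UpperSemicontinuous u) (hlsc : LowerSemicontinuous v)
    (Ψ₁ Ψ₂ : X → X → ℝ)
    (hΨ₁c : Continuous fun p : X × X => Ψ₁ p.1 p.2)
    (hΨ₂c : Continuous fun p : X × X => Ψ₂ p.1 p.2)
    (hΨ₁nn : ∀ x y, 0 ≤ Ψ₁ x y) (hΨ₂nn : ∀ x y, 0 ≤ Ψ₂ x y)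
    (hΨ₁0 : ∀ x y, (Ψ₁ x y = 0 ↔ x = y)) (hΨ₂0 : ∀ x y, (Ψ₂ x y = 0 ↔ x = y))
    (Υ : X → ℝ) (hΥc : Continuous Υ) (hΥnn : ∀ x, 0 ≤ Υ x)
    (hΥcpt : ∀ c : ℝ, IsCompact {x | Υ x ≤ c})
    (ε : ℝ) (hε0 : 0 < ε) (hε1 : ε < 1) :
    ∃ K : Set X, IsCompact K ∧ ∀ α₁ α₂ : ℝ, 0 < α₁ → 0 < α₂ →
      ∃ x y : X, x ∈ K ∧ y ∈ K ∧ ∀ x' y' : X,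
        u x' / (1 - ε) - v y' / (1 + ε) - α₁ * Ψ₁ x' y' - α₂ * Ψ₂ x' y'
            - (ε / (1 - ε)) * Υ x' - (ε / (1 + ε)) * Υ y' ≤
          u x / (1 - ε) - v y / (1 + ε) - α₁ * Ψ₁ x y - α₂ * Ψ₂ x y
            - (ε / (1 - ε)) * Υ x - (ε / (1 + ε)) * Υ y := by
  obtain ⟨x₀⟩ := ‹Nonempty X›
  have h1ε : (0:ℝ) < 1 - ε := by linarith
  have h2ε : (0:ℝ) < 1 + ε := by linarith
  set L : ℝ := -M / (1 - ε) - M / (1 + ε) - (ε / (1 - ε)) * Υ x₀ - (ε / (1 + ε)) * Υ x₀ with hLdef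
  set B : ℝ := M / (1 - ε) + M / (1 + ε) - L with hBdef
  set c : ℝ := max (B * (1 - ε) / ε) (B * (1 + ε) / ε) with hcdef
  refine ⟨{x | Υ x ≤ c}, hΥcpt c, ?_⟩
  intro α₁ α₂ hα₁ hα₂
  set Φ : X × X → ℝ := fun p => u p.1 / (1 - ε) - v p.2 / (1 + ε) - α₁ * Ψ₁ p.1 p.2
      - α₂ * Ψ₂ p.1 p.2 - (ε / (1 - ε)) * Υ p.1 - (ε / (1 + ε)) * Υ p.2 with hΦdef
  have hΨ₁00 : Ψ₁ x₀ x₀ = 0 := (hΨ₁0 x₀ x₀).2 rfl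
  have hΨ₂00 : Ψ₂ x₀ x₀ = 0 := (hΨ₂0 x₀ x₀).2 rfl
  -- lower bound at the diagonal base point
  have hL0 : L ≤ Φ (x₀, x₀) := by
    have hu := abs_le.1 (hub x₀)
    have hv := abs_le.1 (hvb x₀)
    have h1 : -M / (1 - ε) ≤ u x₀ / (1 - ε) := by gcongr; exact hu.1
    have h2 : v x₀ / (1 + ε) ≤ M / (1 + ε) := by gcongr; exact hv.2
    simp only [hΦdef, hΨ₁00, hΨ₂00, mul_zero]
    rw [hLdef]
    linarith
  -- key trapping estimate
  have key : ∀ x y : X, L ≤ Φ (x, y) → Υ x ≤ c ∧ Υ y ≤ c := by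
    intro x y hxy
    have hu := abs_le.1 (hub x)
    have hv := abs_le.1 (hvb y)
    have h1 : u x / (1 - ε) ≤ M / (1 - ε) := by gcongr; exact hu.2
    have h2 : -(M / (1 + ε)) ≤ v y / (1 + ε) := by rw [← neg_div]; gcongr; exact hv.1
    have hα₁Ψ : 0 ≤ α₁ * Ψ₁ x y := mul_nonneg hα₁.le (hΨ₁nn x y)
    have hα₂Ψ : 0 ≤ α₂ * Ψ₂ x y := mul_nonneg hα₂.le (hΨ₂nn x y)
    have hpos1 : (0:ℝ) < ε / (1 - ε) := div_pos hε0 h1ε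
    have hpos2 : (0:ℝ) < ε / (1 + ε) := div_pos hε0 h2ε
    have hΥx : 0 ≤ (ε / (1 - ε)) * Υ x := mul_nonneg hpos1.le (hΥnn x)
    have hΥy : 0 ≤ (ε / (1 + ε)) * Υ y := mul_nonneg hpos2.le (hΥnn y)
    simp only [hΦdef] at hxy
    have hx' : (ε / (1 - ε)) * Υ x ≤ B := by rw [hBdef]; linarith
    have hy' : (ε / (1 + ε)) * Υ y ≤ B := by rw [hBdef]; linarith
    constructor
    · have : Υ x ≤ B / (ε / (1 - ε)) := (le_div_iff₀ hpos1).2 (by linarith [hx', mul_comm (ε / (1 - ε)) (Υ x)])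
      have heq : B / (ε / (1 - ε)) = B * (1 - ε) / ε := by
        field_simp
      calc Υ x ≤ B * (1 - ε) / ε := heq ▸ this
        _ ≤ c := le_max_left _ _
    · have : Υ y ≤ B / (ε / (1 + ε)) := (le_div_iff₀ hpos2).2 (by linarith [hy', mul_comm (ε / (1 + ε)) (Υ y)])
      have heq : B / (ε / (1 + ε)) = B * (1 + ε) / ε := by
        field_simp
      calc Υ y ≤ B * (1 + ε) / ε := heq ▸ this
        _ ≤ c := le_max_right _ _
  have hx₀K : Υ x₀ ≤ c := (key x₀ x₀ hL0).1
  -- Φ is upper semicontinuous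
  have hA : UpperSemicontinuous (fun p : X × X => u p.1 / (1 - ε)) :=
    UpperSemicontinuous.comp (usc_div_const husc h1ε) continuous_fst
  have hBv : UpperSemicontinuous (fun p : X × X => (-(v p.2)) / (1 + ε)) :=
    UpperSemicontinuous.comp (usc_div_const (usc_neg_of_lsc hlsc) h2ε) continuous_snd
  have hC : Continuous (fun p : X × X => -(α₁ * Ψ₁ p.1 p.2) + -(α₂ * Ψ₂ p.1 p.2)
      + -((ε / (1 - ε)) * Υ p.1) + -((ε / (1 + ε)) * Υ p.2)) := by
    apply Continuous.add
    apply Continuous.add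
    apply Continuous.add
    · exact ((continuous_const.mul hΨ₁c)).neg
    · exact ((continuous_const.mul hΨ₂c)).neg
    · exact ((continuous_const.mul (hΥc.comp continuous_fst))).neg
    · exact ((continuous_const.mul (hΥc.comp continuous_snd))).neg
  have hΦusc : UpperSemicontinuous Φ := by
    have h := (hA.add hBv).add hC.upperSemicontinuous
    have heq : (fun z : X × X => (u z.1 / (1 - ε) + (-(v z.2)) / (1 + ε))
        + (-(α₁ * Ψ₁ z.1 z.2) + -(α₂ * Ψ₂ z.1 z.2)
          + -((ε / (1 - ε)) * Υ z.1) + -((ε / (1 + ε)) * Υ z.2))) = Φ := by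
      funext p; simp only [hΦdef]; ring
    rwa [heq] at h
  -- maximize over K × K
  have hKK : IsCompact ({x | Υ x ≤ c} ×ˢ {x | Υ x ≤ c}) := (hΥcpt c).prod (hΥcpt c)
  obtain ⟨p, hpK, hpmax⟩ := usc_exists_max hKK ⟨(x₀, x₀), ⟨hx₀K, hx₀K⟩⟩ hΦusc
  refine ⟨p.1, p.2, hpK.1, hpK.2, ?_⟩
  intro x' y'
  have hΦp : Φ (p.1, p.2) = Φ p := by rfl
  show Φ (x', y') ≤ Φ (p.1, p.2)
  rw [hΦp]
  by_cases h : L ≤ Φ (x', y')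
  · obtain ⟨hx', hy'⟩ := key x' y' h
    exact hpmax (x', y') ⟨hx', hy'⟩
  · push_neg at h
    have := hpmax (x₀, x₀) ⟨hx₀K, hx₀K⟩
    linarith
end

section
/- In the setting of the two-penalization lemma, for fixed ε > 0 and α₂ > 0, along any sequence α₁ → ∞ the maximizers (x_{(α₁,α₂),ε}, y_{(α₁,α₂),ε}) have limit points (x_{α₂,ε}, y_{α₂,ε}) in K_ε satisfying Ψ₁(x_{α₂,ε}, y_{α₂,ε}) = 0, and moreover α₁·Ψ₁(x_{(α₁,α₂),ε}, y_{(α₁,α₂),ε}) → 0 as α₁ → ∞. -/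
open Filter

/-- Two-penalization lemma, limit points as `α₁ → ∞` for fixed `ε, α₂`: the
maximizers have limit points `(x_{α₂,ε}, y_{α₂,ε})` in `K_ε` at which `Ψ₁`
vanishes, and `α₁ Ψ₁(x_{(α₁,α₂),ε}, y_{(α₁,α₂),ε}) → 0`. -/
theorem stmt16 {X : Type*} [MetricSpace X]
    (u v : X → ℝ) (M : ℝ) (hub : ∀ x, |u x| ≤ M) (hvb : ∀ x, |v x| ≤ M)
    (husc : UpperSemicontinuous u) (hlsc : LowerSemicontinuous v)
    (Ψ₁ Ψ₂ : X → X → ℝ)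
    (hΨ₁c : Continuous fun p : X × X => Ψ₁ p.1 p.2)
    (hΨ₂c : Continuous fun p : X × X => Ψ₂ p.1 p.2)
    (hΨ₁nn : ∀ x y, 0 ≤ Ψ₁ x y) (hΨ₂nn : ∀ x y, 0 ≤ Ψ₂ x y)
    (hΨ₁0 : ∀ x y, (Ψ₁ x y = 0 ↔ x = y)) (hΨ₂0 : ∀ x y, (Ψ₂ x y = 0 ↔ x = y))
    (Υ : X → ℝ) (hΥc : Continuous Υ) (hΥnn : ∀ x, 0 ≤ Υ x)
    (hΥcpt : ∀ c : ℝ, IsCompact {x | Υ x ≤ c})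
    (ε α₂ : ℝ) (hε0 : 0 < ε) (hε1 : ε < 1) (hα₂ : 0 < α₂)
    (x y : ℝ → X) (K : Set X) (hK : IsCompact K)
    (hmem : ∀ α₁ : ℝ, 0 < α₁ → x α₁ ∈ K ∧ y α₁ ∈ K)
    (hmax : ∀ α₁ : ℝ, 0 < α₁ → ∀ x' y' : X,
      u x' / (1 - ε) - v y' / (1 + ε) - α₁ * Ψ₁ x' y' - α₂ * Ψ₂ x' y'
          - (ε / (1 - ε)) * Υ x' - (ε / (1 + ε)) * Υ y' ≤
        u (x α₁) / (1 - ε) - v (y α₁) / (1 + ε) - α₁ * Ψ₁ (x α₁) (y α₁)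
          - α₂ * Ψ₂ (x α₁) (y α₁)
          - (ε / (1 - ε)) * Υ (x α₁) - (ε / (1 + ε)) * Υ (y α₁)) :
    (∃ p : X × X, p.1 ∈ K ∧ p.2 ∈ K ∧
        MapClusterPt p atTop fun α₁ => (x α₁, y α₁)) ∧
    (∀ p : X × X, MapClusterPt p atTop (fun α₁ => (x α₁, y α₁)) →
        Ψ₁ p.1 p.2 = 0) ∧
    Tendsto (fun α₁ : ℝ => α₁ * Ψ₁ (x α₁) (y α₁)) atTop (nhds 0) := by
  -- the value at the maximizer
  set m : ℝ → ℝ := fun a =>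
    u (x a) / (1 - ε) - v (y a) / (1 + ε) - a * Ψ₁ (x a) (y a)
      - α₂ * Ψ₂ (x a) (y a) - (ε / (1 - ε)) * Υ (x a)
      - (ε / (1 + ε)) * Υ (y a) with hm
  -- key monotonicity inequality
  have key : ∀ a b : ℝ, 0 < a → a ≤ b →
      m b + (b - a) * Ψ₁ (x b) (y b) ≤ m a := by
    intro a b ha hab
    have := hmax a ha (x b) (y b)
    simp only [hm]
    nlinarith [this]
  have hmono : ∀ a b : ℝ, 0 < a → a ≤ b → m b ≤ m a := by
    intro a b ha hab
    have h1 := key a b ha hab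
    nlinarith [hΨ₁nn (x b) (y b)]
  -- lower bound
  set x0 : X := x 1 with hx0
  set C : ℝ := u x0 / (1 - ε) - v x0 / (1 + ε) - (ε / (1 - ε)) * Υ x0
      - (ε / (1 + ε)) * Υ x0 with hC
  have hlb : ∀ a : ℝ, 0 < a → C ≤ m a := by
    intro a ha
    have := hmax a ha x0 x0
    have h10 : Ψ₁ x0 x0 = 0 := (hΨ₁0 x0 x0).2 rfl
    have h20 : Ψ₂ x0 x0 = 0 := (hΨ₂0 x0 x0).2 rfl
    simp only [hm, hC]
    nlinarith [this]
  -- m' is a globally antitone truncation of m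
  set m' : ℝ → ℝ := fun a => m (max a 1) with hm'
  have hm'anti : Antitone m' := by
    intro a b hab
    exact hmono (max a 1) (max b 1) (lt_of_lt_of_le one_pos (le_max_right _ _))
      (max_le_max hab le_rfl)
  have hm'bdd : BddBelow (Set.range m') := by
    refine ⟨C, ?_⟩
    rintro _ ⟨a, rfl⟩
    exact hlb _ (lt_of_lt_of_le one_pos (le_max_right _ _))
  have hm'lim : Tendsto m' atTop (nhds (⨅ a, m' a)) :=
    tendsto_atTop_ciInf hm'anti hm'bdd
  have hhalf : Tendsto (fun a : ℝ => a / 2) atTop atTop :=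
    tendsto_id.atTop_div_const two_pos
  have hdiff : Tendsto (fun a : ℝ => 2 * (m' (a / 2) - m' a)) atTop (nhds 0) := by
    have := ((hm'lim.comp hhalf).sub hm'lim).const_mul (2 : ℝ)
    simpa using this
  -- third conjunct
  have hg : Tendsto (fun a : ℝ => a * Ψ₁ (x a) (y a)) atTop (nhds 0) := by
    apply tendsto_of_tendsto_of_tendsto_of_le_of_le' tendsto_const_nhds hdiff
    · filter_upwards [eventually_ge_atTop (0 : ℝ)] with a ha
      exact mul_nonneg ha (hΨ₁nn _ _)
    · filter_upwards [eventually_ge_atTop (2 : ℝ)] with a ha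
      have ha2 : (0 : ℝ) < a / 2 := by linarith
      have hkey := key (a / 2) a ha2 (by linarith)
      have e1 : m' (a / 2) = m (a / 2) := by
        simp only [hm']
        rw [max_eq_left (by linarith)]
      have e2 : m' a = m a := by
        simp only [hm']
        rw [max_eq_left (by linarith)]
      rw [e1, e2]
      nlinarith [hkey]
  have hΨ : Tendsto (fun a : ℝ => Ψ₁ (x a) (y a)) atTop (nhds 0) := by
    apply tendsto_of_tendsto_of_tendsto_of_le_of_le' tendsto_const_nhds hg
    · filter_upwards with a using hΨ₁nn _ _
    · filter_upwards [eventually_ge_atTop (1 : ℝ)] with a ha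
      nlinarith [hΨ₁nn (x a) (y a)]
  refine ⟨?_, ?_, hg⟩
  · -- existence of cluster point
    have hle : Filter.map (fun a : ℝ => (x a, y a)) atTop ≤ 𝓟 (K ×ˢ K) := by
      rw [Filter.le_principal_iff, Filter.mem_map]
      filter_upwards [eventually_gt_atTop (0 : ℝ)] with a ha
      exact ⟨(hmem a ha).1, (hmem a ha).2⟩
    obtain ⟨p, hp, hcp⟩ := (hK.prod hK).exists_mapClusterPt hle
    exact ⟨p, hp.1, hp.2, hcp⟩
  · intro p hp
    have h1 : MapClusterPt (Ψ₁ p.1 p.2) atTop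
        ((fun q : X × X => Ψ₁ q.1 q.2) ∘ fun a => (x a, y a)) :=
      hp.continuousAt_comp hΨ₁c.continuousAt
    have h2 : NeBot (nhds (Ψ₁ p.1 p.2) ⊓ nhds (0 : ℝ)) := by
      have := h1.clusterPt
      rw [ClusterPt] at this
      exact this.mono (inf_le_inf_left _ hΨ)
    exact eq_of_nhds_neBot h2
end
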